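/- Let C > 0, ε > 0, M > 0, m ∈ ℕ and z ∈ ℝ^m. The function s ↦ (1/(2M))‖z − s‖² + C·∑_{i=1}^m max(0, |s_i| − ε) on ℝ^m (Euclidean norm) attains its minimum at a unique point whose i-th coordinate equals z_i − C·M if z_i ≥ ε + C·M, equals ε if ε < z_i < ε + C·M, equals z_i if |z_i| ≤ ε, equals −ε if −ε − C·M < z_i < −ε, and equals z_i + C·M if z_i ≤ −ε − C·M. -/

import Mathlib

noncomputable def prx (C ε M a : ℝ) : ℝ :=
  if ε + C * M ≤ a then a - C * M
  else if ε < a then ε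
  else if -ε ≤ a then a
  else if -ε - C * M < a then -ε
  else a + C * M

lemma key1 (C ε M : ℝ) (hC : 0 < C) (hε : 0 < ε) (hM : 0 < M) (a x : ℝ) :
    M * C * max 0 (|prx C ε M a| - ε) ≤
      M * C * max 0 (|x| - ε) + (a - prx C ε M a) * (prx C ε M a - x) := by
  have hx0 : 0 ≤ max 0 (|x| - ε) := le_max_left _ _
  have hx1 : x - ε ≤ max 0 (|x| - ε) :=
    le_trans (by linarith [le_abs_self x]) (le_max_right _ _)
  have hx2 : -x - ε ≤ max 0 (|x| - ε) :=
    le_trans (by linarith [neg_abs_le x]) (le_max_right _ _)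
  have hMC : 0 < M * C := mul_pos hM hC
  unfold prx
  split_ifs with h1 h2 h3 h4
  · have hp : |a - C * M| = a - C * M := abs_of_nonneg (by nlinarith)
    rw [hp, max_eq_right (by nlinarith)]
    nlinarith [mul_le_mul_of_nonneg_left hx1 hMC.le]
  · rw [abs_of_nonneg hε.le, max_eq_left (by linarith)]
    rcases le_total x ε with hx | hx
    · nlinarith [mul_nonneg (mul_nonneg hM.le hC.le) hx0]
    · nlinarith [mul_le_mul_of_nonneg_left hx1 hMC.le, mul_nonneg (sub_nonneg.mpr hx) (by linarith : (0:ℝ) ≤ ε + C * M - a)]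
  · rw [max_eq_left (by cases abs_cases a with
      | inl h => linarith [h.1]
      | inr h => linarith [h.1])]
    nlinarith [mul_nonneg hMC.le hx0]
  · rw [abs_neg, abs_of_nonneg hε.le, max_eq_left (by linarith)]
    rcases le_total (-ε) x with hx | hx
    · nlinarith [mul_nonneg hMC.le hx0]
    · nlinarith [mul_le_mul_of_nonneg_left hx2 hMC.le]
  · have hp : |a + C * M| = -(a + C * M) := abs_of_nonpos (by push_neg at h4; nlinarith)
    push_neg at h4
    rw [hp, max_eq_right (by nlinarith)]
    nlinarith [mul_le_mul_of_nonneg_left hx2 hMC.le]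

lemma key2 (C ε M : ℝ) (hC : 0 < C) (hε : 0 < ε) (hM : 0 < M) (a x : ℝ) :
    (1 / (2 * M)) * (a - prx C ε M a) ^ 2 + C * max 0 (|prx C ε M a| - ε)
      + (1 / (2 * M)) * (x - prx C ε M a) ^ 2 ≤
      (1 / (2 * M)) * (a - x) ^ 2 + C * max 0 (|x| - ε) := by
  have hk := key1 C ε M hC hε hM a x
  set p := prx C ε M a
  rw [← sub_nonneg]
  have : (1 / (2 * M)) * (a - x) ^ 2 + C * max 0 (|x| - ε)
      - ((1 / (2 * M)) * (a - p) ^ 2 + C * max 0 (|p| - ε) + (1 / (2 * M)) * (x - p) ^ 2)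
      = (M * C * max 0 (|x| - ε) + (a - p) * (p - x) - M * C * max 0 (|p| - ε)) / M := by
    field_simp
    ring
  rw [this]
  exact div_nonneg (by linarith) hM.le

lemma norm_sq_eq {m : ℕ} (x : EuclideanSpace ℝ (Fin m)) : ‖x‖ ^ 2 = ∑ i, (x i) ^ 2 := by
  rw [EuclideanSpace.norm_eq, Real.sq_sqrt (by positivity)]
  simp [Real.norm_eq_abs, sq_abs]

theorem stmt_11 (C ε M : ℝ) (hC : 0 < C) (hε : 0 < ε) (hM : 0 < M) (m : ℕ)
    (z : EuclideanSpace ℝ (Fin m)) :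
    ∃ s : EuclideanSpace ℝ (Fin m),
      (∀ t : EuclideanSpace ℝ (Fin m),
        (1 / (2 * M)) * ‖z - s‖ ^ 2 + C * ∑ i, max 0 (|s i| - ε) ≤
          (1 / (2 * M)) * ‖z - t‖ ^ 2 + C * ∑ i, max 0 (|t i| - ε)) ∧
      (∀ s' : EuclideanSpace ℝ (Fin m),
        (∀ t : EuclideanSpace ℝ (Fin m),
          (1 / (2 * M)) * ‖z - s'‖ ^ 2 + C * ∑ i, max 0 (|s' i| - ε) ≤
            (1 / (2 * M)) * ‖z - t‖ ^ 2 + C * ∑ i, max 0 (|t i| - ε)) → s' = s) ∧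
      ∀ i : Fin m,
        (ε + C * M ≤ z i → s i = z i - C * M) ∧
        (ε < z i ∧ z i < ε + C * M → s i = ε) ∧
        (|z i| ≤ ε → s i = z i) ∧
        (-ε - C * M < z i ∧ z i < -ε → s i = -ε) ∧
        (z i ≤ -ε - C * M → s i = z i + C * M) := by
  set s : EuclideanSpace ℝ (Fin m) := WithLp.toLp 2 (fun i => prx C ε M (z i)) with hs
  have happly : ∀ (u v : EuclideanSpace ℝ (Fin m)) (i : Fin m), (u - v) i = u i - v i :=
    fun u v i => rfl
  have hmain : ∀ t : EuclideanSpace ℝ (Fin m),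
      ((1 / (2 * M)) * ‖z - s‖ ^ 2 + C * ∑ i, max 0 (|s i| - ε))
        + (1 / (2 * M)) * ∑ i, (t i - s i) ^ 2 ≤
      (1 / (2 * M)) * ‖z - t‖ ^ 2 + C * ∑ i, max 0 (|t i| - ε) := by
    intro t
    rw [norm_sq_eq, norm_sq_eq]
    simp only [happly]
    rw [Finset.mul_sum, Finset.mul_sum, Finset.mul_sum, Finset.mul_sum, Finset.mul_sum,
      ← Finset.sum_add_distrib, ← Finset.sum_add_distrib, ← Finset.sum_add_distrib]
    apply Finset.sum_le_sum
    intro i _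
    exact key2 C ε M hC hε hM (z i) (t i)
  refine ⟨s, ?_, ?_, ?_⟩
  · intro t
    have := hmain t
    have hnn : 0 ≤ (1 / (2 * M)) * ∑ i, (t i - s i) ^ 2 := by positivity
    linarith
  · intro s' hs'
    have h1 := hs' s
    have h2 := hmain s'
    have h3 : (1 / (2 * M)) * ∑ i, (s' i - s i) ^ 2 ≤ 0 := by linarith
    have h4 : ∑ i, (s' i - s i) ^ 2 ≤ 0 := by
      by_contra h
      push_neg at h
      nlinarith [mul_pos (by positivity : (0:ℝ) < 1 / (2 * M)) h]
    have h5 : ∑ i, (s' i - s i) ^ 2 = 0 :=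
      le_antisymm h4 (Finset.sum_nonneg fun i _ => sq_nonneg _)
    ext i
    have h6 := (Finset.sum_eq_zero_iff_of_nonneg (fun i _ => sq_nonneg (s' i - s i))).mp h5 i (Finset.mem_univ i)
    have := pow_eq_zero_iff (n := 2) (by norm_num) |>.mp h6
    linarith [sub_eq_zero.mp this, (rfl : s i = s i)]
  · intro i
    have hCM : 0 < C * M := mul_pos hC hM
    have hsi : s i = prx C ε M (z i) := rfl
    rw [hsi]
    unfold prx
    constructor
    · intro h; rw [if_pos h]
    refine ⟨?_, ?_, ?_, ?_⟩
    · rintro ⟨h1, h2⟩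
      rw [if_neg (by linarith), if_pos h1]
    · intro h
      obtain ⟨ha, hb⟩ := abs_le.mp h
      rw [if_neg (by linarith), if_neg (by linarith), if_pos ha]
    · rintro ⟨h1, h2⟩
      rw [if_neg (by linarith), if_neg (by linarith), if_neg (by linarith), if_pos h1]
    · intro h
      rw [if_neg (by nlinarith), if_neg (by nlinarith), if_neg (by nlinarith), if_neg (by linarith)]
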